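/- Let n ≥ 3, N ≥ 1, L ≥ 0 and m_1, …, m_N ≥ 2. In the group Z_n(Σ_Γ(L)), the elements h_1 and u_1 satisfy the relation ⟨h_1, u_1 h_1 u_1^{-1}⟩_{m_1} = ⟨u_1 h_1 u_1^{-1}, h_1⟩_{m_1}. -/

import Mathlib

namespace StmtS

/-- Generators of `Z_n(Σ_Γ(L))`: `Sum.inl i` is `h_{i+1}`, `Sum.inr (Sum.inl l)` is the
puncture generator `t_{l+1}`, and `Sum.inr (Sum.inr v)` is the cone-point generator
`u_{v+1}`. -/
abbrev Gen (n L N : ℕ) := Fin (n - 1) ⊕ (Fin L ⊕ Fin N)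

def sh {n L N : ℕ} (i : Fin (n - 1)) : FreeGroup (Gen n L N) := FreeGroup.of (Sum.inl i)

def st {n L N : ℕ} (l : Fin L) : FreeGroup (Gen n L N) := FreeGroup.of (Sum.inr (Sum.inl l))

def su {n L N : ℕ} (v : Fin N) : FreeGroup (Gen n L N) := FreeGroup.of (Sum.inr (Sum.inr v))

/-- Defining relations of `Z_n(Σ_Γ(L))` for `Γ = Z_{m_1} * ⋯ * Z_{m_N}`. -/
def srels (n L N : ℕ) (m : Fin N → ℕ) : Set (FreeGroup (Gen n L N)) :=
  {r | (∃ v : Fin N, r = su v ^ m v)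
    ∨ (∃ i j : Fin (n - 1), (i : ℕ) + 1 = (j : ℕ) ∧
        r = sh i * sh j * sh i * (sh j * sh i * sh j)⁻¹)
    ∨ (∃ i j : Fin (n - 1), (i : ℕ) + 2 ≤ (j : ℕ) ∧
        r = sh i * sh j * (sh j * sh i)⁻¹)
    ∨ (∃ (l : Fin L) (i : Fin (n - 1)), 1 ≤ (i : ℕ) ∧
        r = st l * sh i * (sh i * st l)⁻¹)
    ∨ (∃ (v : Fin N) (i : Fin (n - 1)), 1 ≤ (i : ℕ) ∧
        r = su v * sh i * (sh i * su v)⁻¹)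
    ∨ (∃ (l : Fin L) (i : Fin (n - 1)), (i : ℕ) = 0 ∧
        r = (sh i * st l * sh i) * st l * (st l * (sh i * st l * sh i))⁻¹)
    ∨ (∃ (v : Fin N) (i : Fin (n - 1)), (i : ℕ) = 0 ∧
        r = (sh i * su v * sh i) * su v * (su v * (sh i * su v * sh i))⁻¹)
    ∨ (∃ (l₁ l₂ : Fin L) (i : Fin (n - 1)), (l₁ : ℕ) < (l₂ : ℕ) ∧ (i : ℕ) = 0 ∧
        r = st l₁ * ((sh i)⁻¹ * st l₂ * sh i) * (((sh i)⁻¹ * st l₂ * sh i) * st l₁)⁻¹)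
    ∨ (∃ (v₁ v₂ : Fin N) (i : Fin (n - 1)), (v₁ : ℕ) < (v₂ : ℕ) ∧ (i : ℕ) = 0 ∧
        r = su v₁ * ((sh i)⁻¹ * su v₂ * sh i) * (((sh i)⁻¹ * su v₂ * sh i) * su v₁)⁻¹)
    ∨ (∃ (l : Fin L) (v : Fin N) (i : Fin (n - 1)), (i : ℕ) = 0 ∧
        r = st l * ((sh i)⁻¹ * su v * sh i) * (((sh i)⁻¹ * su v * sh i) * st l)⁻¹)}

/-- The orbifold braid group `Z_n(Σ_Γ(L))`. -/
abbrev S (n L N : ℕ) (m : Fin N → ℕ) := PresentedGroup (srels n L N m)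

/-- The product `h_1 h_2 ⋯ h_{n-1}` in `Z_n(Σ_Γ(L))`. -/
def hprod (n L N : ℕ) (m : Fin N → ℕ) : S n L N m :=
  (List.ofFn (fun i : Fin (n - 1) => (PresentedGroup.of (Sum.inl i) : S n L N m))).prod

/-- `c_ν = h_{n-1}⁻¹ ⋯ h_1⁻¹ · u_ν · h_1 ⋯ h_{n-1}` in `Z_n(Σ_Γ(L))`. -/
def c (n L N : ℕ) (m : Fin N → ℕ) (v : Fin N) : S n L N m :=
  (hprod n L N m)⁻¹ * PresentedGroup.of (Sum.inr (Sum.inr v)) * hprod n L N m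

/-- `alt x y k` is the alternating product `x y x y ⋯` with `k` factors, starting with `x`. -/
def alt {G : Type*} [Monoid G] (x y : G) : ℕ → G
  | 0 => 1
  | k + 1 => x * alt y x k

lemma alt_add_two {G : Type*} [Monoid G] (x y : G) (k : ℕ) :
    alt x y (k + 2) = x * y * alt x y k := by
  simp [alt, mul_assoc]

lemma alt_even {G : Type*} [Monoid G] (x y : G) (k : ℕ) :
    alt x y (2 * k) = (x * y) ^ k := by
  induction k with
  | zero => simp [alt]
  | succ k ih =>
    rw [show 2 * (k + 1) = 2 * k + 2 by ring, alt_add_two, ih, pow_succ']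

lemma alt_odd {G : Type*} [Monoid G] (x y : G) (k : ℕ) :
    alt x y (2 * k + 1) = (x * y) ^ k * x := by
  induction k with
  | zero => simp [alt]
  | succ k ih =>
    rw [show 2 * (k + 1) + 1 = (2 * k + 1) + 2 by ring, alt_add_two, ih, pow_succ']
    simp only [mul_assoc]

lemma conj_pow_aux {G : Type*} [Group G] (a x : G) (k : ℕ) :
    (a⁻¹ * x * a) ^ k = a⁻¹ * x ^ k * a := by
  induction k with
  | zero => simp
  | succ k ih =>
    calc (a⁻¹ * x * a) ^ (k + 1) = (a⁻¹ * x ^ k * a) * (a⁻¹ * x * a) := by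
          rw [pow_succ, ih]
      _ = a⁻¹ * (x ^ k * x) * a := by group
      _ = a⁻¹ * x ^ (k + 1) * a := by rw [pow_succ]

lemma key {G : Type*} [Group G] (h u : G) (m : ℕ)
    (hbr : h * u * h * u = u * h * u * h) (hum : u ^ m = 1) :
    alt h (u * h * u⁻¹) m = alt (u * h * u⁻¹) h m := by
  have cz_u : Commute (h * u * h * u) u := by
    show (h * u * h * u) * u = u * (h * u * h * u)
    conv_lhs => rw [hbr]
    group
  have cz_h : Commute (h * u * h * u) h := by
    show (h * u * h * u) * h = h * (h * u * h * u)
    conv_rhs => rw [hbr]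
    group
  have hab : h * (u * h * u⁻¹) = (h * u * h * u) * (u⁻¹ * u⁻¹) := by group
  have hba : (u * h * u⁻¹) * h = (h * u * h * u) * (h⁻¹ * (u⁻¹ * u⁻¹) * h) := by
    rw [hbr]; group
  have huu : ∀ k, (u⁻¹ * u⁻¹) ^ k = (u ^ (2 * k))⁻¹ := by
    intro k
    rw [show u⁻¹ * u⁻¹ = (u * u)⁻¹ by group, inv_pow, (pow_two u).symm,
      ← pow_mul]
  have cz_uu : Commute (h * u * h * u) (u⁻¹ * u⁻¹) :=
    (cz_u.inv_right).mul_right (cz_u.inv_right)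
  have cz_cc : Commute (h * u * h * u) (h⁻¹ * (u⁻¹ * u⁻¹) * h) :=
    (cz_h.inv_right.mul_right cz_uu).mul_right cz_h
  rcases Nat.even_or_odd m with ⟨k, hk⟩ | ⟨k, hk⟩
  · have hk2 : m = 2 * k := by omega
    clear hk; subst hk2
    rw [alt_even, alt_even, hab, hba, cz_uu.mul_pow, cz_cc.mul_pow, conj_pow_aux,
      huu, hum, inv_one]
    simp
  · subst hk
    rw [alt_odd, alt_odd, hab, hba, cz_uu.mul_pow, cz_cc.mul_pow, conj_pow_aux, huu]
    have h2k : (u ^ (2 * k))⁻¹ = u := by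
      have h1 : u ^ (2 * k) = u⁻¹ := by
        have h2 := hum
        rw [pow_succ] at h2
        exact eq_inv_of_mul_eq_one_left h2
      rw [h1, inv_inv]
    rw [h2k]
    have last : (h⁻¹ * u * h) * (u * h * u⁻¹) = u * h := by
      calc (h⁻¹ * u * h) * (u * h * u⁻¹) = h⁻¹ * (u * h * u * h) * u⁻¹ := by group
        _ = h⁻¹ * (h * u * h * u) * u⁻¹ := by rw [hbr]
        _ = u * h := by group
    rw [mul_assoc ((h * u * h * u) ^ k) u h,
      mul_assoc ((h * u * h * u) ^ k) (h⁻¹ * u * h) (u * h * u⁻¹), last]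

theorem stmt_8 (n L N : ℕ) (m : Fin N → ℕ) (hn : 3 ≤ n) (hN : 1 ≤ N) (hL : 0 ≤ L)
    (hm : ∀ v : Fin N, 2 ≤ m v) :
    (alt (PresentedGroup.of (Sum.inl ⟨0, by omega⟩))
        (PresentedGroup.of (Sum.inr (Sum.inr ⟨0, by omega⟩)) *
          PresentedGroup.of (Sum.inl ⟨0, by omega⟩) *
          (PresentedGroup.of (Sum.inr (Sum.inr ⟨0, by omega⟩)))⁻¹)
        (m ⟨0, by omega⟩) : S n L N m) =
      alt (PresentedGroup.of (Sum.inr (Sum.inr ⟨0, by omega⟩)) *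
          PresentedGroup.of (Sum.inl ⟨0, by omega⟩) *
          (PresentedGroup.of (Sum.inr (Sum.inr ⟨0, by omega⟩)))⁻¹)
        (PresentedGroup.of (Sum.inl ⟨0, by omega⟩)) (m ⟨0, by omega⟩) := by
  have hnn : 0 < n - 1 := by omega
  have hNN : 0 < N := hN
  set i0 : Fin (n - 1) := ⟨0, hnn⟩ with hi0
  set v0 : Fin N := ⟨0, hNN⟩ with hv0
  have rel_one : ∀ r ∈ srels n L N m, PresentedGroup.mk (srels n L N m) r = 1 := by
    intro r hr
    exact (QuotientGroup.eq_one_iff r).mpr (Subgroup.subset_normalClosure hr)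
  have hum : (PresentedGroup.of (Sum.inr (Sum.inr v0)) : S n L N m) ^ m v0 = 1 := by
    have h1 := rel_one (su v0 ^ m v0) (Or.inl ⟨v0, rfl⟩)
    rwa [map_pow] at h1
  have hbr : (PresentedGroup.of (Sum.inl i0) : S n L N m) *
      PresentedGroup.of (Sum.inr (Sum.inr v0)) * PresentedGroup.of (Sum.inl i0) *
      PresentedGroup.of (Sum.inr (Sum.inr v0)) =
      PresentedGroup.of (Sum.inr (Sum.inr v0)) * PresentedGroup.of (Sum.inl i0) *
      PresentedGroup.of (Sum.inr (Sum.inr v0)) * PresentedGroup.of (Sum.inl i0) := by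
    have h1 := rel_one ((sh i0 * su v0 * sh i0) * su v0 *
        (su v0 * (sh i0 * su v0 * sh i0))⁻¹)
      (Or.inr (Or.inr (Or.inr (Or.inr (Or.inr (Or.inr
        (Or.inl ⟨v0, i0, rfl, rfl⟩)))))))
    simp only [map_mul, map_inv] at h1
    have h3 : (PresentedGroup.mk (srels n L N m) (sh i0) *
        PresentedGroup.mk (srels n L N m) (su v0) * PresentedGroup.mk (srels n L N m) (sh i0)) *
        PresentedGroup.mk (srels n L N m) (su v0) =
        PresentedGroup.mk (srels n L N m) (su v0) *
        (PresentedGroup.mk (srels n L N m) (sh i0) * PresentedGroup.mk (srels n L N m) (su v0) *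
          PresentedGroup.mk (srels n L N m) (sh i0)) := by
      rw [← mul_inv_eq_one]
      convert h1 using 2
    have heq : ∀ a : Gen n L N, (PresentedGroup.of a : S n L N m) =
        PresentedGroup.mk (srels n L N m) (FreeGroup.of a) := fun _ => rfl
    simp only [heq]
    calc PresentedGroup.mk (srels n L N m) (FreeGroup.of (Sum.inl i0)) *
          PresentedGroup.mk (srels n L N m) (FreeGroup.of (Sum.inr (Sum.inr v0))) *
          PresentedGroup.mk (srels n L N m) (FreeGroup.of (Sum.inl i0)) *
          PresentedGroup.mk (srels n L N m) (FreeGroup.of (Sum.inr (Sum.inr v0))) =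
        (PresentedGroup.mk (srels n L N m) (sh i0) * PresentedGroup.mk (srels n L N m) (su v0) *
          PresentedGroup.mk (srels n L N m) (sh i0)) *
          PresentedGroup.mk (srels n L N m) (su v0) := by
          simp only [sh, su, mul_assoc]
      _ = PresentedGroup.mk (srels n L N m) (su v0) *
          (PresentedGroup.mk (srels n L N m) (sh i0) * PresentedGroup.mk (srels n L N m) (su v0) *
          PresentedGroup.mk (srels n L N m) (sh i0)) := h3
      _ = _ := by simp only [sh, su, mul_assoc]
  exact key _ _ (m v0) hbr hum

end StmtS
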